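/- In the trefoil group G = ⟨u, v ∣ u² = v³⟩ (the presented group on two generators u, v with single relator u²v⁻³), the center of G is exactly the cyclic subgroup generated by the element u² (= v³). -/

import Mathlib

/-- The relator set of the trefoil group `G = ⟨u, v ∣ u² = v³⟩`, where
`u` corresponds to `true` and `v` to `false` in the free group on `Bool`. -/
def trefoilRels : Set (FreeGroup Bool) :=
  {FreeGroup.of true ^ 2 * (FreeGroup.of false ^ 3)⁻¹}

/-- The trefoil group `G = ⟨u, v ∣ u² = v³⟩`. -/
abbrev TrefoilGroup : Type := PresentedGroup trefoilRels

open Monoid Monoid.CoprodI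

section Generic

variable {ι : Type*} {M : ι → Type*} [∀ i, Group (M i)] [DecidableEq ι] [∀ i, DecidableEq (M i)]

theorem neword_toList_eq {i₁ j₁ i₂ j₂} (w₁ : NeWord M i₁ j₁) (w₂ : NeWord M i₂ j₂)
    (h : w₁.prod = w₂.prod) : w₁.toList = w₂.toList := by
  have hw : w₁.toWord = w₂.toWord := Word.equiv.symm.injective h
  exact congrArg Word.toList hw

theorem neword_snd_eq {i₁ j₁ i₂ j₂} (w₁ : NeWord M i₁ j₁) (w₂ : NeWord M i₂ j₂)
    (h : w₁.prod = w₂.prod) : j₁ = j₂ := by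
  have hl := neword_toList_eq w₁ w₂ h
  have h1 := w₁.toList_getLast?
  rw [hl, w₂.toList_getLast?] at h1
  exact ((Sigma.mk.inj_iff.mp (Option.some_injective _ h1)).1).symm

theorem neword_fst_eq {i₁ j₁ i₂ j₂} (w₁ : NeWord M i₁ j₁) (w₂ : NeWord M i₂ j₂)
    (h : w₁.prod = w₂.prod) : i₁ = i₂ := by
  have hl := neword_toList_eq w₁ w₂ h
  have h1 := w₁.toList_head?
  rw [hl, w₂.toList_head?] at h1
  exact ((Sigma.mk.inj_iff.mp (Option.some_injective _ h1)).1).symm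


end Generic

abbrev TM : Bool → Type := fun b => Multiplicative (ZMod (cond b 2 3))
abbrev TH : Type := Monoid.CoprodI TM

def te (b : Bool) : TM b := Multiplicative.ofAdd (1 : ZMod (cond b 2 3))

theorem te_ne_one (b : Bool) : te b ≠ 1 := by cases b <;> decide

/-- Key sub-lemma: no nontrivial central element has a reduced word starting in component
`true` and ending in component `false`. -/
theorem no_central_tf (z : TH) (hc : ∀ g : TH, g * z = z * g)
    (w : NeWord TM true false) (hw : w.prod = z) : False := by
  obtain ⟨b, hb0, hbc⟩ :=
    (by decide : ∀ c : ZMod 3, ∃ b : ZMod 3, b ≠ 0 ∧ b ≠ c) (Multiplicative.toAdd (w.last⁻¹))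
  set bb : TM false := Multiplicative.ofAdd b with hbb
  have hbne : bb ≠ 1 := by
    simp only [hbb, ne_eq, ofAdd_eq_one]
    exact hb0
  have hC : Commute (CoprodI.of bb) z := hc _
  have hhead : bb⁻¹ * w.inv.head ≠ 1 := by
    rw [NeWord.inv_head]
    intro h
    rw [inv_mul_eq_one] at h
    exact hbc (by rw [hbb] at h; simpa using congrArg Multiplicative.toAdd h)
  have hft : (false : Bool) ≠ true := by decide
  set u : NeWord TM false false := ((NeWord.singleton bb hbne).append hft w).inv with hu
  set v : NeWord TM false true := NeWord.mulHead w.inv bb⁻¹ hhead with hv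
  have hup : u.prod = (CoprodI.of bb * z)⁻¹ := by
    rw [hu, NeWord.inv_prod, NeWord.append_prod, NeWord.prod_singleton, hw]
  have hvp : v.prod = (CoprodI.of bb * z)⁻¹ := by
    rw [hv, NeWord.mulHead_prod, NeWord.inv_prod, hw, map_inv, mul_inv_rev]
    exact hC.inv_inv
  exact hft (neword_snd_eq u v (hup.trans hvp.symm))

theorem no_central_same (z : TH) (hc : ∀ g : TH, g * z = z * g)
    {i : Bool} (w : NeWord TM i i) (hw : w.prod = z) : False := by
  have h1 : (!i) ≠ i := Bool.not_ne_self i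
  have h2 : i ≠ (!i) := (Bool.not_ne_self i).symm
  have hm : te (!i) ≠ 1 := te_ne_one _
  have hm' : (te (!i))⁻¹ ≠ 1 := by simpa using hm
  set u : NeWord TM (!i) (!i) :=
    ((NeWord.singleton (te (!i)) hm).append h1 w).append h2 (NeWord.singleton (te (!i))⁻¹ hm')
    with hu
  have hup : u.prod = z := by
    rw [hu, NeWord.append_prod, NeWord.append_prod, NeWord.prod_singleton,
      NeWord.prod_singleton, hw, map_inv, hc, mul_inv_cancel_right]
  exact h1 (neword_fst_eq u w (hup.trans hw.symm))

theorem center_TH : Subgroup.center TH = ⊥ := by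
  rw [eq_bot_iff]
  intro z hz
  rw [Subgroup.mem_bot]
  by_contra hne
  have hc : ∀ g : TH, g * z = z * g := fun g => Subgroup.mem_center_iff.mp hz g
  have hzw : Word.equiv z ≠ Word.empty := by
    intro h
    apply hne
    have := congrArg Word.equiv.symm h
    rw [Equiv.symm_apply_apply] at this
    rw [this]
    exact Word.prod_empty
  obtain ⟨i, j, w, hwz⟩ := NeWord.of_word (Word.equiv z) hzw
  have hprod : w.prod = z := by
    rw [NeWord.prod, hwz]
    exact Word.equiv.symm_apply_apply z
  match i, j, w with
  | true, true, w => exact no_central_same z hc w hprod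
  | false, false, w => exact no_central_same z hc w hprod
  | true, false, w => exact no_central_tf z hc w hprod
  | false, true, w =>
    exact no_central_tf z⁻¹ (fun g => ((show Commute g z from hc g).inv_right).eq) w.inv
      (by rw [NeWord.inv_prod, hprod])


def zmodHom {Q : Type*} [Group Q] (n : ℕ) (q : Q) (h : q ^ (n : ℤ) = 1) :
    Multiplicative (ZMod n) →* Q :=
  AddMonoidHom.toMultiplicativeLeft
    (ZMod.lift n ⟨AddMonoidHom.mk' (fun k => Additive.ofMul (q ^ k))
      (by intro a b; simp [zpow_add]), by simpa using congrArg Additive.ofMul (by simpa using h : q ^ n = 1)⟩)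

theorem zmodHom_one {Q : Type*} [Group Q] (n : ℕ) (q : Q) (h : q ^ (n : ℤ) = 1) :
    zmodHom n q h (Multiplicative.ofAdd (1 : ZMod n)) = q := by
  have h1 : ((1 : ℤ) : ZMod n) = (1 : ZMod n) := by push_cast; rfl
  rw [zmodHom, AddMonoidHom.coe_toMultiplicativeLeft]
  show Additive.toMul ((ZMod.lift n _) (Multiplicative.toAdd (Multiplicative.ofAdd (1 : ZMod n)))) = q
  rw [toAdd_ofAdd, ← h1, ZMod.lift_coe]
  simp

theorem trefoil_rel :
    (PresentedGroup.of (rels := trefoilRels) true) ^ 2 =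
      (PresentedGroup.of (rels := trefoilRels) false) ^ 3 := by
  have h : PresentedGroup.mk trefoilRels (FreeGroup.of true ^ 2 * (FreeGroup.of false ^ 3)⁻¹) = 1 :=
    (QuotientGroup.eq_one_iff _).mpr
      (Subgroup.subset_normalClosure (by exact rfl))
  rw [map_mul, map_inv, map_pow, map_pow] at h
  rw [mul_inv_eq_one] at h
  exact h

theorem trefoil_center_mem :
    (PresentedGroup.of (rels := trefoilRels) true) ^ 2 ∈ Subgroup.center TrefoilGroup := by
  rw [Subgroup.mem_center_iff]
  intro g
  have hg : g ∈ Subgroup.centralizer {(PresentedGroup.of (rels := trefoilRels) true) ^ 2} := by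
    refine PresentedGroup.generated_by trefoilRels _ (fun b => ?_) g
    rw [Subgroup.mem_centralizer_iff]
    rintro h ⟨rfl⟩
    cases b
    · rw [trefoil_rel]
      exact ((Commute.refl _).pow_left 3).eq
    · exact ((Commute.refl _).pow_left 2).eq
  exact (Subgroup.mem_centralizer_iff.mp hg _ (Set.mem_singleton _)).symm

theorem trefoil_rels_lift : ∀ r ∈ trefoilRels,
    FreeGroup.lift (fun b => (CoprodI.of (te b) : TH)) r = 1 := by
  rintro r ⟨rfl⟩
  rw [map_mul, map_inv, map_pow, map_pow, FreeGroup.lift_apply_of, FreeGroup.lift_apply_of,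
    ← map_pow, ← map_pow, (by decide : te true ^ 2 = 1), (by decide : te false ^ 3 = 1),
    map_one, map_one, inv_one, mul_one]

def trefoilToTH : TrefoilGroup →* TH := PresentedGroup.toGroup trefoil_rels_lift

theorem trefoilToTH_surjective : Function.Surjective trefoilToTH := by
  intro x
  have : x ∈ trefoilToTH.range := by
    refine CoprodI.induction_on x (one_mem _) (fun i m => ?_) (fun a b ha hb => mul_mem ha hb)
    have hgen : ∀ (j : Bool) (m' : TM j), te j ^ (Multiplicative.toAdd m').val = m' := by
      intro j
      cases j
      · exact (by decide :
          ∀ m' : Multiplicative (ZMod 3), te false ^ (Multiplicative.toAdd m').val = m')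
      · exact (by decide :
          ∀ m' : Multiplicative (ZMod 2), te true ^ (Multiplicative.toAdd m').val = m')
    obtain ⟨k, hk⟩ : ∃ k : ℕ, te i ^ k = m := ⟨_, hgen i m⟩
    exact ⟨PresentedGroup.of i ^ k, by
      rw [map_pow, trefoilToTH, PresentedGroup.toGroup.of, ← map_pow, hk]⟩
  exact this

theorem zpowers_le_center :
    Subgroup.zpowers ((PresentedGroup.of (rels := trefoilRels) true) ^ 2) ≤
      Subgroup.center TrefoilGroup :=
  Subgroup.zpowers_le.mpr trefoil_center_mem

instance trefoilN_normal :
    (Subgroup.zpowers ((PresentedGroup.of (rels := trefoilRels) true) ^ 2)).Normal := by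
  constructor
  intro n hn g
  have hcen : n ∈ Subgroup.center TrefoilGroup := zpowers_le_center hn
  have h : g * n * g⁻¹ = n := by
    rw [Subgroup.mem_center_iff.mp hcen g, mul_inv_cancel_right]
  rwa [h]

noncomputable def trefoilSigma :
    TH →* TrefoilGroup ⧸ Subgroup.zpowers ((PresentedGroup.of (rels := trefoilRels) true) ^ 2) := by
  refine CoprodI.lift (fun b => zmodHom (cond b 2 3)
    (QuotientGroup.mk' _ (PresentedGroup.of b)) ?_)
  cases b
  · show (QuotientGroup.mk' _ (PresentedGroup.of (rels := trefoilRels) false)) ^ ((3 : ℕ) : ℤ) = 1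
    rw [zpow_natCast, ← map_pow, ← trefoil_rel]
    exact (QuotientGroup.eq_one_iff _).mpr (Subgroup.mem_zpowers _)
  · show (QuotientGroup.mk' _ (PresentedGroup.of (rels := trefoilRels) true)) ^ ((2 : ℕ) : ℤ) = 1
    rw [zpow_natCast, ← map_pow]
    exact (QuotientGroup.eq_one_iff _).mpr (Subgroup.mem_zpowers _)

theorem trefoilSigma_comp :
    trefoilSigma.comp trefoilToTH =
      QuotientGroup.mk' (Subgroup.zpowers ((PresentedGroup.of (rels := trefoilRels) true) ^ 2)) := by
  ext b
  show trefoilSigma (trefoilToTH (PresentedGroup.of b)) = _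
  rw [trefoilToTH, PresentedGroup.toGroup.of]
  show trefoilSigma (CoprodI.of (te b)) = _
  rw [trefoilSigma, CoprodI.lift_of]
  exact zmodHom_one _ _ _

theorem center_trefoilGroup_eq_zpowers :
    Subgroup.center TrefoilGroup =
      Subgroup.zpowers ((PresentedGroup.of (rels := trefoilRels) true) ^ 2) := by
  refine le_antisymm ?_ zpowers_le_center
  intro z hz
  have h1 : trefoilToTH z ∈ Subgroup.center TH := by
    rw [Subgroup.mem_center_iff]
    intro h
    obtain ⟨g, rfl⟩ := trefoilToTH_surjective h
    rw [← map_mul, ← map_mul, Subgroup.mem_center_iff.mp hz g]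
  rw [center_TH, Subgroup.mem_bot] at h1
  have h2 := DFunLike.congr_fun trefoilSigma_comp z
  rw [MonoidHom.comp_apply, h1, map_one] at h2
  exact (QuotientGroup.eq_one_iff z).mp h2.symm
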